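/- For every N ≥ 1 and every 0 ≤ s ≤ N, ∑_{p ∈ {0,1}^N, p_0+⋯+p_{N−1} = s} ∑_{π₃ ∈ S_N} ∑_{π₄ ∈ S_N} sgn(π₃) sgn(π₄) ∏_{i=0}^{N−1} (π₃(i) + π₄(i) + p_i)! / (π₃(i)! π₄(i)!) = (N!)³ / (s! ((N−s)!)²). -/

import Mathlib

open Finset Nat Polynomial Equiv Matrix


lemma prodshift (a b : ℕ) : a ! * ∏ k ∈ range b, (a + 1 + k) = (a + b)! := by
  induction b with
  | zero => simp
  | succ n ih => rw [prod_range_succ, ← mul_assoc, ih, ← add_assoc, factorial_succ]; ring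

lemma teles (m s : ℕ) : (∏ k ∈ range s, (m + 1 + k)!) * m ! = (∏ k ∈ range s, (m + k)!) * (m + s)! := by
  rw [show (∏ k ∈ range s, (m+1+k)!) = ∏ k ∈ range s, (m+(k+1))! from
    prod_congr rfl fun k _ => by rw [show m+1+k = m+(k+1) by omega]]
  have h1 := prod_range_succ' (fun k => (m+k)!) s
  have h2 := prod_range_succ (fun k => (m+k)!) s
  rw [← h2, h1]; simp

lemma core (m s : ℕ) : (∏ i ∈ range m, ∏ k ∈ range s, (i + 2 + k)) * s ! * m ! * (∏ j ∈ range s, j !)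
    = (m + s)! * ∏ j ∈ range s, (m + j)! := by
  have hswap : ∏ i ∈ range m, ∏ k ∈ range s, (i + 2 + k) = ∏ k ∈ range s, ∏ i ∈ range m, (k + 2 + i) := by
    rw [Finset.prod_comm]; apply prod_congr rfl; intro k _; apply prod_congr rfl; intro i _; ring
  have hdag : (∏ i ∈ range m, ∏ k ∈ range s, (i + 2 + k)) * (∏ k ∈ range s, (k+1)!) =
      ∏ k ∈ range s, (m + 1 + k)! := by
    rw [hswap, ← prod_mul_distrib]
    apply prod_congr rfl; intro k _
    calc (∏ i ∈ range m, (k + 2 + i)) * (k+1)! = (k+1)! * ∏ i ∈ range m, (k+1+1+i) := by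
          rw [mul_comm]
      _ = (k+1+m)! := prodshift (k+1) m
      _ = (m+1+k)! := by rw [show k+1+m = m+1+k by omega]
  have h0 : (∏ k ∈ range s, (k+1)!) = (∏ k ∈ range s, k !) * s ! := by
    have t := teles 0 s
    simp only [Nat.zero_add, Nat.factorial_zero, mul_one] at t
    rw [show (∏ k ∈ range s, (k+1)!) = ∏ k ∈ range s, (1+k)! from
      prod_congr rfl fun k _ => by rw [add_comm], t]
  have hpos : 0 < ∏ k ∈ range s, (k+1)! := prod_pos (fun k _ => factorial_pos _)
  apply Nat.eq_of_mul_eq_mul_right hpos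
  calc (∏ i ∈ range m, ∏ k ∈ range s, (i + 2 + k)) * s ! * m ! * (∏ j ∈ range s, j !) * (∏ k ∈ range s, (k+1)!)
      = ((∏ i ∈ range m, ∏ k ∈ range s, (i + 2 + k)) * (∏ k ∈ range s, (k+1)!)) * s ! * m ! * (∏ j ∈ range s, j !) := by ring
    _ = (∏ k ∈ range s, (m + 1 + k)!) * s ! * m ! * (∏ j ∈ range s, j !) := by rw [hdag]
    _ = ((∏ k ∈ range s, (m + 1 + k)!) * m !) * ((∏ j ∈ range s, j !) * s !) := by ring
    _ = ((∏ k ∈ range s, (m + k)!) * (m+s)!) * ((∏ j ∈ range s, j !) * s !) := by rw [teles]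
    _ = (m + s)! * (∏ j ∈ range s, (m + j)!) * (∏ k ∈ range s, (k+1)!) := by rw [h0]; ring

lemma idn (m s : ℕ) :
    (∏ i ∈ range (m+s), (if m ≤ i then ((m+s)-1-i)! else ((m-1-i)! * ∏ k ∈ range s, (m-i+1+k)))) * s ! * m !
    = (m+s)! * ∏ k ∈ range (m+s), k ! := by
  rw [prod_range_add, prod_range_add (fun k => k !) m s]
  have hfirst : (∏ i ∈ range m, (if m ≤ i then ((m+s)-1-i)! else ((m-1-i)! * ∏ k ∈ range s, (m-i+1+k))))
      = (∏ i ∈ range m, i !) * ∏ i ∈ range m, ∏ k ∈ range s, (i+2+k) := by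
    rw [← prod_mul_distrib]
    rw [← prod_range_reflect (fun i => i ! * ∏ k ∈ range s, (i+2+k)) m]
    apply prod_congr rfl; intro i hi
    rw [mem_range] at hi
    rw [if_neg (by omega)]
    congr 1
    apply prod_congr rfl; intro k _
    rw [show m - i + 1 + k = m - 1 - i + 2 + k by omega]
  have hsecond : (∏ j ∈ range s, (if m ≤ m + j then ((m+s)-1-(m+j))! else ((m-1-(m+j))! * ∏ k ∈ range s, (m-(m+j)+1+k))))
      = ∏ j ∈ range s, j ! := by
    rw [← prod_range_reflect (fun j => j !) s]
    apply prod_congr rfl; intro j hj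
    rw [mem_range] at hj
    rw [if_pos (by omega)]
    rw [show m + s - 1 - (m + j) = s - 1 - j by omega]
  rw [hfirst, hsecond]
  calc (∏ i ∈ range m, i !) * (∏ i ∈ range m, ∏ k ∈ range s, (i+2+k)) * (∏ j ∈ range s, j !) * s ! * m !
      = (∏ i ∈ range m, i !) * ((∏ i ∈ range m, ∏ k ∈ range s, (i+2+k)) * s ! * m ! * (∏ j ∈ range s, j !)) := by ring
    _ = (∏ i ∈ range m, i !) * ((m + s)! * ∏ j ∈ range s, (m + j)!) := by rw [core]
    _ = (m+s)! * ((∏ k ∈ range m, k !) * ∏ k ∈ range s, (m+k)!) := by ring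

lemma prodIoi {N : ℕ} (i : Fin N) (F : ℕ → ℚ) :
    ∏ j ∈ Finset.Ioi i, F (j : ℕ) = ∏ k ∈ range (N - 1 - (i:ℕ)), F ((i:ℕ) + 1 + k) := by
  have h1 : ∏ j ∈ Finset.Ioi i, F (j:ℕ) = ∏ t ∈ Finset.Ioc (i:ℕ) (N-1), F t := by
    rw [show Finset.Ioc (i:ℕ) (N-1) = Finset.Ioo (i:ℕ) N by ext t; simp only [mem_Ioc, mem_Ioo]; have := i.isLt; omega]
    rw [← Fin.map_valEmbedding_Ioi, prod_map]; rfl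
  rw [h1]
  have h2 : Finset.Ioc (i:ℕ) (N-1) = Finset.Ico ((i:ℕ)+1) N := by
    ext t; simp only [mem_Ioc, mem_Ico]
    have := i.isLt; omega
  rw [h2, prod_Ico_eq_prod_range]
  have h3 : N - ((i:ℕ)+1) = N - 1 - (i:ℕ) := by omega
  rw [h3]

lemma hfactq (n : ℕ) : ∏ k ∈ range n, ((k:ℚ)+1) = (n ! : ℚ) := by
  induction n with
  | zero => simp
  | succ t ih => rw [prod_range_succ, ih, factorial_succ]; push_cast; ring

lemma hVval (m s : ℕ) :
    (∏ i : Fin (m+s), ∏ j ∈ Finset.Ioi i, ((((j:ℕ):ℚ) + (if m ≤ (j:ℕ) then 1 else 0)) - (((i:ℕ):ℚ) + (if m ≤ (i:ℕ) then 1 else 0))))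
    = ((∏ i ∈ range (m+s), (if m ≤ i then ((m+s)-1-i)! else ((m-1-i)! * ∏ k ∈ range s, (m-i+1+k))) : ℕ) : ℚ) := by
  set N := m + s with hN
  set w : ℕ → ℚ := fun t => (t:ℚ) + (if m ≤ t then 1 else 0) with hw
  have step1 : ∀ i : Fin N, (∏ j ∈ Finset.Ioi i, (w (j:ℕ) - w (i:ℕ)))
      = ∏ k ∈ range (N - 1 - (i:ℕ)), (w ((i:ℕ)+1+k) - w (i:ℕ)) := fun i => prodIoi i (fun t => w t - w (i:ℕ))
  calc (∏ i : Fin N, ∏ j ∈ Finset.Ioi i, (w (j:ℕ) - w (i:ℕ)))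
      = ∏ i : Fin N, ∏ k ∈ range (N - 1 - (i:ℕ)), (w ((i:ℕ)+1+k) - w (i:ℕ)) := by
        apply Finset.prod_congr rfl; intro i _; exact step1 i
    _ = ∏ a ∈ range N, ∏ k ∈ range (N - 1 - a), (w (a+1+k) - w a) :=
        Fin.prod_univ_eq_prod_range (fun a => ∏ k ∈ range (N - 1 - a), (w (a+1+k) - w a)) N
    _ = ((∏ i ∈ range N, (if m ≤ i then (N-1-i)! else ((m-1-i)! * ∏ k ∈ range s, (m-i+1+k))) : ℕ) : ℚ) := by
        push_cast
        apply Finset.prod_congr rfl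
        intro a ha
        rw [mem_range] at ha
        by_cases hma : m ≤ a
        · rw [if_pos hma]
          calc ∏ k ∈ range (N - 1 - a), (w (a+1+k) - w a)
              = ∏ k ∈ range (N - 1 - a), ((k:ℚ)+1) := by
                apply Finset.prod_congr rfl; intro k _
                rw [hw]; simp only
                rw [if_pos (by omega : m ≤ a+1+k), if_pos hma]
                push_cast; ring
            _ = ((N-1-a)! : ℚ) := hfactq _
        · rw [if_neg hma]
          have hsplit : N - 1 - a = (m - 1 - a) + s := by omega
          rw [hsplit, prod_range_add]
          push_cast
          congr 1
          · calc ∏ k ∈ range (m-1-a), (w (a+1+k) - w a)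
                = ∏ k ∈ range (m-1-a), ((k:ℚ)+1) := by
                  apply Finset.prod_congr rfl; intro k hk
                  rw [mem_range] at hk
                  rw [hw]; simp only
                  rw [if_neg (by omega : ¬ m ≤ a+1+k), if_neg hma]
                  push_cast; ring
              _ = ((m-1-a)! : ℚ) := hfactq _
          · apply Finset.prod_congr rfl; intro k _
            rw [hw]; simp only
            rw [if_pos (by omega : m ≤ a+1+(m-1-a+k)), if_neg hma]
            have h1 : ((a+1+(m-1-a+k) : ℕ) : ℚ) = (m : ℚ) + k := by
              have : a+1+(m-1-a+k) = m + k := by omega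
              rw [this]; push_cast; ring
            rw [h1, Nat.cast_sub (le_of_not_ge hma)]; ring



lemma detTmax (m s : ℕ) :
    (Matrix.of fun j k : Fin (m+s) =>
      ((((j:ℕ) + (k:ℕ) + if m ≤ (j:ℕ) then 1 else 0))! : ℚ) / (((j:ℕ)! : ℚ) * ((k:ℕ)! : ℚ))).det
    = (((m+s)! : ℚ))^2 / ((s ! : ℚ) * ((m ! : ℚ))^2) := by
  set N := m + s with hN
  set x : ℕ → ℕ := fun t => if m ≤ t then t+1 else t with hx
  set p : Fin N → ℚ[X] := fun k => ∏ t ∈ range (k:ℕ), (X + C ((t:ℚ)+1)) with hp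
  have hmonic : ∀ k : Fin N, (p k).Monic := fun k => monic_prod_of_monic _ _ (fun t _ => monic_X_add_C _)
  have hdeg : ∀ k : Fin N, (p k).natDegree = (k:ℕ) := by
    intro k
    rw [hp]; simp only
    rw [Polynomial.natDegree_prod _ _ (fun t _ => (monic_X_add_C _).ne_zero)]
    calc ∑ t ∈ range (k:ℕ), (X + C ((t:ℚ)+1)).natDegree
        = ∑ t ∈ range (k:ℕ), 1 := Finset.sum_congr rfl (fun t _ => natDegree_X_add_C _)
      _ = (k:ℕ) := by simp
  have heval : ∀ a k : ℕ, ((a ! : ℚ)) * Polynomial.eval ((a:ℚ)) (∏ t ∈ range k, (X + C ((t:ℚ)+1)))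
      = ((a+k)! : ℚ) := by
    intro a k
    rw [eval_prod]
    simp only [eval_add, eval_X, eval_C]
    calc (a ! : ℚ) * ∏ t ∈ range k, ((a:ℚ) + ((t:ℚ)+1))
        = ((a ! * ∏ t ∈ range k, (a+1+t) : ℕ) : ℚ) := by push_cast; congr 1; apply prod_congr rfl; intro t _; ring
      _ = ((a+k)! : ℚ) := by rw [prodshift]
  -- rewrite the matrix as row factors * column factors * polynomial-eval matrix
  have hM : (Matrix.of fun j k : Fin N =>
      ((((j:ℕ) + (k:ℕ) + if m ≤ (j:ℕ) then 1 else 0))! : ℚ) / (((j:ℕ)! : ℚ) * ((k:ℕ)! : ℚ)))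
      = Matrix.of fun j k : Fin N => (((x (j:ℕ))! : ℚ) / ((j:ℕ)! : ℚ)) *
          (Matrix.of fun j k : Fin N => (((k:ℕ)! : ℚ))⁻¹ *
            (Matrix.of fun j k : Fin N => Polynomial.eval ((x (j:ℕ) : ℕ) : ℚ) (p k)) j k) j k := by
    ext j k
    simp only [Matrix.of_apply]
    have he : Polynomial.eval ((x (j:ℕ) : ℕ) : ℚ) (p k) = ((x (j:ℕ) + (k:ℕ))! : ℚ) / ((x (j:ℕ))! : ℚ) := by
      rw [eq_div_iff (by exact_mod_cast (x (j:ℕ)).factorial_ne_zero : ((x (j:ℕ))! : ℚ) ≠ 0), mul_comm]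
      exact heval (x (j:ℕ)) (k:ℕ)
    rw [he, hx]
    have hne1 : ((j:ℕ)! : ℚ) ≠ 0 := by exact_mod_cast (j:ℕ).factorial_ne_zero
    have hne2 : ((k:ℕ)! : ℚ) ≠ 0 := by exact_mod_cast (k:ℕ).factorial_ne_zero
    by_cases hmj : m ≤ (j:ℕ)
    · simp only [if_pos hmj]
      have hne3 : (((j:ℕ)+1)! : ℚ) ≠ 0 := by exact_mod_cast ((j:ℕ)+1).factorial_ne_zero
      rw [show (j:ℕ) + (k:ℕ) + 1 = (j:ℕ) + 1 + (k:ℕ) by omega]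
      field_simp
    · simp only [if_neg hmj]
      rw [add_zero]
      field_simp
  rw [hM, Matrix.det_mul_column, Matrix.det_mul_row]
  have hvdm : (Matrix.of fun j k : Fin N => Polynomial.eval ((x (j:ℕ) : ℕ) : ℚ) (p k)).det
      = ((∏ i ∈ range N, (if m ≤ i then (N-1-i)! else ((m-1-i)! * ∏ k ∈ range s, (m-i+1+k))) : ℕ) : ℚ) := by
    rw [← Matrix.det_eval_matrixOfPolynomials_eq_det_vandermonde (fun j : Fin N => ((x (j:ℕ) : ℕ) : ℚ)) p hdeg hmonic]
    rw [Matrix.det_vandermonde]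
    have := hVval m s
    rw [← this]
    apply Finset.prod_congr rfl; intro i _
    apply Finset.prod_congr rfl; intro j _
    have hcast : ∀ t : ℕ, ((x t : ℕ) : ℚ) = (t:ℚ) + (if m ≤ t then 1 else 0) := by
      intro t; rw [hx]; simp only; split_ifs <;> push_cast <;> ring
    rw [hcast, hcast]
  rw [hvdm]
  have hc : (∏ j : Fin N, (((x (j:ℕ))! : ℚ) / (((j:ℕ))! : ℚ))) * (m ! : ℚ) = ((m+s)! : ℚ) := by
    have hpt : ∀ j : Fin N, ((x (j:ℕ))! : ℚ) / (((j:ℕ))! : ℚ) = (if m ≤ (j:ℕ) then ((j:ℕ):ℚ)+1 else 1) := by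
      intro j; rw [hx]; simp only; split_ifs with h
      · rw [factorial_succ]; push_cast
        rw [mul_div_assoc, div_self (by exact_mod_cast (j:ℕ).factorial_ne_zero : (((j:ℕ))! : ℚ) ≠ 0), mul_one]
      · exact div_self (by exact_mod_cast (j:ℕ).factorial_ne_zero)
    rw [Finset.prod_congr rfl (fun j _ => hpt j),
      Fin.prod_univ_eq_prod_range (fun t => if m ≤ t then ((t:ℚ)+1) else 1) N, hN, prod_range_add]
    have h1 : ∏ i ∈ range m, (if m ≤ i then ((i:ℚ)+1) else 1) = 1 := by
      apply Finset.prod_eq_one; intro i hi; rw [mem_range] at hi; rw [if_neg (by omega)]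
    have h2 : ∏ k ∈ range s, (if m ≤ m + k then (((m+k:ℕ):ℚ)+1) else 1) = ((∏ k ∈ range s, (m+1+k) : ℕ) : ℚ) := by
      push_cast; apply Finset.prod_congr rfl; intro k _; rw [if_pos (by omega)]; push_cast; ring
    rw [h1, h2, one_mul, mul_comm]
    rw [show ((m ! : ℕ) : ℚ) * ((∏ k ∈ range s, (m+1+k) : ℕ) : ℚ) = ((m ! * ∏ k ∈ range s, (m+1+k) : ℕ) : ℚ) by push_cast; ring]
    rw [prodshift]
  have hinv : ∏ k : Fin N, ((((k:ℕ))! : ℚ))⁻¹ = ((∏ k ∈ range N, k ! : ℕ) : ℚ)⁻¹ := by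
    rw [Finset.prod_inv_distrib]
    congr 1
    rw [Fin.prod_univ_eq_prod_range (fun t => ((t ! : ℕ) : ℚ)) N]
    push_cast; rfl
  rw [hinv]
  set W : ℕ := ∏ i ∈ range N, (if m ≤ i then (N-1-i)! else ((m-1-i)! * ∏ k ∈ range s, (m-i+1+k))) with hW
  set P : ℕ := ∏ k ∈ range N, k ! with hP
  have key : ((W : ℚ)) * (s ! : ℚ) * (m ! : ℚ) = ((m+s)! : ℚ) * (P : ℚ) := by
    exact_mod_cast congrArg (fun t : ℕ => (t : ℚ)) (by rw [hW, hP, hN]; exact idn m s)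
  have hPne : (P : ℚ) ≠ 0 := by
    rw [hP]; push_cast
    exact ne_of_gt (Finset.prod_pos (fun k _ => by exact_mod_cast k.factorial_pos))
  have hsne : ((s ! : ℕ) : ℚ) ≠ 0 := by exact_mod_cast s.factorial_ne_zero
  have hmne : ((m ! : ℕ) : ℚ) ≠ 0 := by exact_mod_cast m.factorial_ne_zero
  have hcc : (∏ j : Fin N, (((x (j:ℕ))! : ℚ) / (((j:ℕ))! : ℚ))) = ((m+s)! : ℚ) / (m ! : ℚ) :=
    by rw [eq_div_iff hmne]; exact hc
  have hWq : (W:ℚ) = ((m+s)! : ℚ) * (P:ℚ) / ((s ! : ℚ) * (m ! : ℚ)) := by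
    rw [eq_div_iff (mul_ne_zero hsne hmne)]
    linear_combination key
  rw [hcc, hWq]
  field_simp
  ring


noncomputable def stmtD {N : ℕ} (T : Finset (Fin N)) : Matrix (Fin N) (Fin N) ℚ :=
  Matrix.of fun j k => ((((j:ℕ) + (k:ℕ) + if j ∈ T then 1 else 0))! : ℚ) / ((((j:ℕ))! : ℚ) * (((k:ℕ))! : ℚ))

lemma sumPerm {N : ℕ} (S : Finset (Fin N)) (π₃ : Equiv.Perm (Fin N)) :
    (∑ π₄ : Equiv.Perm (Fin N), (((Equiv.Perm.sign π₃ : ℤ) * (Equiv.Perm.sign π₄ : ℤ) : ℤ) : ℚ) *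
      ∏ i : Fin N, (Nat.factorial ((π₃ i : ℕ) + (π₄ i : ℕ) + if i ∈ S then 1 else 0) : ℚ) /
        ((Nat.factorial (π₃ i : ℕ) : ℚ) * (Nat.factorial (π₄ i : ℕ) : ℚ)))
    = (stmtD (S.image π₃)).det := by
  have hmem : ∀ i : Fin N, (π₃ i ∈ S.image π₃) ↔ (i ∈ S) := by
    intro i
    simp [Finset.mem_image, π₃.injective.eq_iff]
  have hsum : (∑ π₄ : Equiv.Perm (Fin N), (((Equiv.Perm.sign π₃ : ℤ) * (Equiv.Perm.sign π₄ : ℤ) : ℤ) : ℚ) *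
      ∏ i : Fin N, (Nat.factorial ((π₃ i : ℕ) + (π₄ i : ℕ) + if i ∈ S then 1 else 0) : ℚ) /
        ((Nat.factorial (π₃ i : ℕ) : ℚ) * (Nat.factorial (π₄ i : ℕ) : ℚ)))
      = ((Equiv.Perm.sign π₃ : ℤ) : ℚ) * (((stmtD (S.image π₃)).submatrix π₃ id)ᵀ).det := by
    rw [Matrix.det_apply, Finset.mul_sum]
    apply Finset.sum_congr rfl
    intro π₄ _
    rw [Units.smul_def, zsmul_eq_mul]
    have hprod : ∏ i : Fin N, (((stmtD (S.image π₃)).submatrix π₃ id)ᵀ) (π₄ i) i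
        = ∏ i : Fin N, (Nat.factorial ((π₃ i : ℕ) + (π₄ i : ℕ) + if i ∈ S then 1 else 0) : ℚ) /
        ((Nat.factorial (π₃ i : ℕ) : ℚ) * (Nat.factorial (π₄ i : ℕ) : ℚ)) := by
      apply Finset.prod_congr rfl
      intro i _
      simp only [Matrix.transpose_apply, Matrix.submatrix_apply, id_eq, stmtD, Matrix.of_apply]
      rw [if_congr (hmem i) rfl rfl]
    rw [hprod]
    push_cast
    ring
  rw [hsum, Matrix.det_transpose, Matrix.det_permute]
  rcases Int.units_eq_one_or (Equiv.Perm.sign π₃) with h | h <;> rw [h] <;> norm_num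

lemma filtercard (N m : ℕ) : ((Finset.univ : Finset (Fin N)).filter (fun j : Fin N => m ≤ (j:ℕ))).card = N - m := by
  rw [← Finset.card_range (N-m)]
  refine Finset.card_bij' (fun (a : Fin N) _ => (a:ℕ) - m)
    (fun (b : ℕ) (hb : b ∈ Finset.range (N-m)) => (⟨b + m, by rw [Finset.mem_range] at hb; omega⟩ : Fin N)) ?_ ?_ ?_ ?_
  · intro a ha
    simp only [Finset.mem_filter, Finset.mem_univ, true_and] at ha
    have := a.isLt
    simp only [Finset.mem_range]
    omega
  · intro b hb
    simp only [Finset.mem_range] at hb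
    simp only [Finset.mem_filter, Finset.mem_univ, true_and, Fin.val_mk]
    omega
  · intro a ha
    simp only [Finset.mem_filter, Finset.mem_univ, true_and] at ha
    apply Fin.ext
    simp only [Fin.val_mk]
    omega
  · intro b hb
    simp only [Finset.mem_range] at hb
    simp only [Fin.val_mk]
    omega

lemma detZero {N s : ℕ} (T : Finset (Fin N)) (hcard : T.card = s)
    (hT : T ≠ (Finset.univ : Finset (Fin N)).filter (fun j : Fin N => N - s ≤ (j:ℕ))) : (stmtD T).det = 0 := by
  have hex : ∃ j : Fin N, ∃ hj : (j:ℕ)+1 < N, j ∈ T ∧ (⟨(j:ℕ)+1, hj⟩ : Fin N) ∉ T := by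
    by_contra hcon
    push_neg at hcon
    apply hT
    have hsN : s ≤ N := hcard ▸ (le_trans (Finset.card_le_card (Finset.subset_univ T)) (by simp))
    have hub : ∀ j : Fin N, j ∈ T → N - s ≤ (j:ℕ) := by
      intro j hj
      have key : ∀ d : ℕ, ∀ k : Fin N, (k:ℕ) = (j:ℕ) + d → k ∈ T := by
        intro d
        induction d with
        | zero => intro k hk; have : k = j := Fin.ext (by omega); rwa [this]
        | succ t ih =>
          intro k hk
          have hlt : (j:ℕ) + t < N := by have := k.isLt; omega
          have hk' : (⟨(j:ℕ)+t, hlt⟩ : Fin N) ∈ T := ih _ rfl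
          have h2 : (j:ℕ) + t + 1 < N := by have := k.isLt; omega
          have := hcon ⟨(j:ℕ)+t, hlt⟩ h2 hk'
          have hke : k = ⟨(j:ℕ)+t+1, h2⟩ := Fin.ext (by simp; omega)
          rwa [hke]
      have hIci : Finset.Ici j ⊆ T := by
        intro k hk
        rw [Finset.mem_Ici] at hk
        exact key ((k:ℕ) - (j:ℕ)) k (by have := (Fin.le_def.mp hk); omega)
      have hcard2 := Finset.card_le_card hIci
      rw [Fin.card_Ici, hcard] at hcard2
      omega
    have hsub : T ⊆ (Finset.univ : Finset (Fin N)).filter (fun j : Fin N => N - s ≤ (j:ℕ)) :=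
      fun j hj => Finset.mem_filter.mpr ⟨Finset.mem_univ _, hub j hj⟩
    refine Finset.eq_of_subset_of_card_le hsub ?_
    rw [filtercard, hcard]
    omega
  obtain ⟨j, hj1, hjT, hj2⟩ := hex
  set M := stmtD T with hM
  set k : Fin N := ⟨(j:ℕ)+1, hj1⟩ with hk
  have hne : k ≠ j := by
    intro h
    have := congrArg Fin.val h
    simp [hk] at this
  have hrow : M j = (((j:ℕ):ℚ)+1) • M k := by
    funext l
    simp only [hM, stmtD, Matrix.of_apply, if_pos hjT, if_neg hj2, if_neg (show (⟨(j:ℕ)+1, hj1⟩ : Fin N) ∉ T from hj2), Pi.smul_apply, smul_eq_mul, hk]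
    rw [show (j:ℕ) + (l:ℕ) + 1 = ((j:ℕ)+1) + (l:ℕ) + 0 by omega]
    rw [add_zero, show ((j:ℕ)+1) + (l:ℕ) = (j:ℕ) + 1 + (l:ℕ) from rfl]
    rw [factorial_succ (j:ℕ)]
    have h1 : (((j:ℕ))! : ℚ) ≠ 0 := by exact_mod_cast (j:ℕ).factorial_ne_zero
    have h2 : (((l:ℕ))! : ℚ) ≠ 0 := by exact_mod_cast (l:ℕ).factorial_ne_zero
    push_cast
    field_simp
  calc M.det = (M.updateRow j (M j)).det := by rw [Matrix.updateRow_eq_self]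
    _ = (M.updateRow j ((((j:ℕ):ℚ)+1) • M k)).det := by rw [← hrow]
    _ = (((j:ℕ):ℚ)+1) * (M.updateRow j (M k)).det := Matrix.det_updateRow_smul M j _ _
    _ = 0 := by
        rw [Matrix.det_zero_of_row_eq hne, mul_zero]
        rw [Matrix.updateRow_self, Matrix.updateRow_ne hne]



theorem stmt13 (N s : ℕ) (hN : 1 ≤ N) (hs : s ≤ N) :
    ∑ S ∈ Finset.powersetCard s (Finset.univ : Finset (Fin N)),
      ∑ π₃ : Equiv.Perm (Fin N), ∑ π₄ : Equiv.Perm (Fin N),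
        (((Equiv.Perm.sign π₃ : ℤ) * (Equiv.Perm.sign π₄ : ℤ) : ℤ) : ℚ) *
          ∏ i : Fin N,
            (Nat.factorial ((π₃ i : ℕ) + (π₄ i : ℕ) + if i ∈ S then 1 else 0) : ℚ) /
              ((Nat.factorial (π₃ i : ℕ) : ℚ) * (Nat.factorial (π₄ i : ℕ) : ℚ))
      = (N.factorial : ℚ) ^ 3 / ((s.factorial : ℚ) * ((N - s).factorial : ℚ) ^ 2) := by
  obtain ⟨m, rfl⟩ : ∃ m, N = m + s := ⟨N - s, by omega⟩
  have h2 : ∀ π₃ : Equiv.Perm (Fin (m+s)),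
      ∑ S ∈ Finset.powersetCard s (Finset.univ : Finset (Fin (m+s))), (stmtD (S.image π₃)).det
      = ∑ T ∈ Finset.powersetCard s (Finset.univ : Finset (Fin (m+s))), (stmtD T).det := by
    intro π₃
    refine Finset.sum_nbij' (fun S => S.image π₃) (fun T => T.image π₃.symm) ?_ ?_ ?_ ?_ ?_
    · intro S hS
      rw [Finset.mem_powersetCard_univ] at hS ⊢
      rw [Finset.card_image_of_injective _ π₃.injective, hS]
    · intro T hT
      rw [Finset.mem_powersetCard_univ] at hT ⊢
      rw [Finset.card_image_of_injective _ π₃.symm.injective, hT]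
    · intro S _; simp [Finset.image_image]
    · intro T _; simp [Finset.image_image]
    · intro S _; rfl
  have hTmem : ((Finset.univ : Finset (Fin (m+s))).filter (fun j : Fin (m+s) => m ≤ (j:ℕ)))
      ∈ Finset.powersetCard s (Finset.univ : Finset (Fin (m+s))) := by
    rw [Finset.mem_powersetCard_univ, filtercard]; omega
  have h3 : ∑ T ∈ Finset.powersetCard s (Finset.univ : Finset (Fin (m+s))), (stmtD T).det
      = (stmtD ((Finset.univ : Finset (Fin (m+s))).filter (fun j : Fin (m+s) => m ≤ (j:ℕ)))).det := by
    apply Finset.sum_eq_single_of_mem _ hTmem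
    intro T hTm hne
    exact detZero T (Finset.mem_powersetCard_univ.mp hTm) (by simpa [Nat.add_sub_cancel] using hne)
  have hDeq : stmtD ((Finset.univ : Finset (Fin (m+s))).filter (fun j : Fin (m+s) => m ≤ (j:ℕ)))
      = Matrix.of fun j k : Fin (m+s) =>
        ((((j:ℕ) + (k:ℕ) + if m ≤ (j:ℕ) then 1 else 0))! : ℚ) / (((j:ℕ)! : ℚ) * ((k:ℕ)! : ℚ)) := by
    ext j k
    simp only [stmtD, Matrix.of_apply, Finset.mem_filter, Finset.mem_univ, true_and]
  calc ∑ S ∈ Finset.powersetCard s (Finset.univ : Finset (Fin (m+s))),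
      ∑ π₃ : Equiv.Perm (Fin (m+s)), ∑ π₄ : Equiv.Perm (Fin (m+s)),
        (((Equiv.Perm.sign π₃ : ℤ) * (Equiv.Perm.sign π₄ : ℤ) : ℤ) : ℚ) *
          ∏ i : Fin (m+s),
            (Nat.factorial ((π₃ i : ℕ) + (π₄ i : ℕ) + if i ∈ S then 1 else 0) : ℚ) /
              ((Nat.factorial (π₃ i : ℕ) : ℚ) * (Nat.factorial (π₄ i : ℕ) : ℚ))
      = ∑ S ∈ Finset.powersetCard s (Finset.univ : Finset (Fin (m+s))),
          ∑ π₃ : Equiv.Perm (Fin (m+s)), (stmtD (S.image π₃)).det := by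
        apply Finset.sum_congr rfl; intro S _
        apply Finset.sum_congr rfl; intro π₃ _
        exact sumPerm S π₃
    _ = ∑ π₃ : Equiv.Perm (Fin (m+s)),
          ∑ S ∈ Finset.powersetCard s (Finset.univ : Finset (Fin (m+s))), (stmtD (S.image π₃)).det :=
        Finset.sum_comm
    _ = ∑ π₃ : Equiv.Perm (Fin (m+s)),
          (stmtD ((Finset.univ : Finset (Fin (m+s))).filter (fun j : Fin (m+s) => m ≤ (j:ℕ)))).det := by
        apply Finset.sum_congr rfl; intro π₃ _
        rw [h2 π₃, h3]
    _ = ((m+s)! : ℚ) * ((((m+s)! : ℚ))^2 / ((s ! : ℚ) * ((m ! : ℚ))^2)) := by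
        rw [Finset.sum_const, Finset.card_univ, Fintype.card_perm, Fintype.card_fin,
          hDeq, detTmax, nsmul_eq_mul]
    _ = ((m+s)! : ℚ) ^ 3 / ((s ! : ℚ) * (((m+s) - s)! : ℚ) ^ 2) := by
        rw [Nat.add_sub_cancel]
        have h1 : ((s ! : ℕ) : ℚ) ≠ 0 := by exact_mod_cast s.factorial_ne_zero
        have hm1 : ((m ! : ℕ) : ℚ) ≠ 0 := by exact_mod_cast m.factorial_ne_zero
        field_simp
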